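/- Fix integers n ≥ 1 and p ≥ 2. For all non-negative integers x₁, …, xₙ, the Grundy value of the position (x₁, …, xₙ) in n-dimensional Ryūō Nim for p is 𝒢(x₁, …, xₙ) = mod(x₁ + ⋯ + xₙ, p) + p·(⌊x₁/p⌋ ⊕ ⋯ ⊕ ⌊xₙ/p⌋). -/

import Mathlib

/-- The minimum excluded value of a set of natural numbers. -/
noncomputable def mex (S : Set ℕ) : ℕ := sInf {n : ℕ | n ∉ S}

/-- Moves of `n`-dimensional Ryūō Nim for `p` from the position `x`: either
remove any positive number of tokens from a single heap, or remove at least one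
token from each of at least two heaps, with the total number of removed tokens
at most `p - 1`. -/
def moveN (n p : ℕ) (x : Fin n → ℕ) : Set (Fin n → ℕ) :=
  {q | ∃ i : Fin n, q i < x i ∧ ∀ j : Fin n, j ≠ i → q j = x j} ∪
  {q | (∀ i : Fin n, q i ≤ x i) ∧
        2 ≤ (Finset.univ.filter fun i : Fin n => q i < x i).card ∧
        (∑ i : Fin n, (x i - q i)) ≤ p - 1}

/-- The nim-sum `a 0 ⊕ a 1 ⊕ ⋯ ⊕ a (n-1)`. -/
def nimSum (n : ℕ) (a : Fin n → ℕ) : ℕ := (List.ofFn a).foldr (· ^^^ ·) 0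

instance : Std.Commutative (α := ℕ) (· ^^^ ·) := ⟨Nat.xor_comm⟩
instance : Std.Associative (α := ℕ) (· ^^^ ·) := ⟨Nat.xor_assoc⟩

lemma mex_eq_of {S : Set ℕ} {m : ℕ} (h1 : m ∉ S) (h2 : ∀ k < m, k ∈ S) :
    mex S = m := by
  refine le_antisymm (Nat.sInf_le h1) (le_csInf ⟨m, h1⟩ ?_)
  intro k hk
  by_contra h
  exact hk (h2 k (lt_of_not_ge h))

lemma nimSum_eq_fold (n : ℕ) (a : Fin n → ℕ) :
    nimSum n a = Finset.univ.fold (β := ℕ) (· ^^^ ·) 0 a := by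
  have h : Finset.univ.fold (β := ℕ) (· ^^^ ·) 0 a
      = Multiset.fold (α := ℕ) (· ^^^ ·) 0 (Multiset.map a ↑(List.finRange n)) := by
    rw [Fin.univ_def]; rfl
  rw [h, Multiset.map_coe, Multiset.coe_fold_r, nimSum, List.ofFn_eq_map]

lemma nimSum_update (n : ℕ) (a : Fin n → ℕ) (i : Fin n) (y : ℕ) :
    nimSum n (Function.update a i y) = y ^^^ (a i ^^^ nimSum n a) := by
  have hmem : i ∈ Finset.univ := Finset.mem_univ i
  rw [nimSum_eq_fold, nimSum_eq_fold, ← Finset.insert_erase hmem,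
      Finset.fold_insert (Finset.notMem_erase i _),
      Finset.fold_insert (Finset.notMem_erase i _),
      Finset.fold_congr (g := a)
        (fun j hj => Function.update_of_ne (Finset.ne_of_mem_erase hj) _ _),
      Function.update_self, Nat.xor_xor_cancel_left]

lemma testBit_nimSum (n : ℕ) (a : Fin n → ℕ) (k : ℕ)
    (h : (nimSum n a).testBit k = true) : ∃ i, (a i).testBit k = true := by
  have key : ∀ l : List ℕ, (l.foldr (· ^^^ ·) 0).testBit k = true →
      ∃ x ∈ l, x.testBit k = true := by
    intro l
    induction l with
    | nil => simp
    | cons hd tl ih =>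
      simp only [List.foldr_cons, Nat.testBit_xor]
      intro hx
      by_cases h1 : hd.testBit k = true
      · exact ⟨hd, List.mem_cons_self, h1⟩
      · simp only [Bool.not_eq_true] at h1
        rw [h1, Bool.false_xor] at hx
        obtain ⟨y, hy, hyk⟩ := ih hx
        exact ⟨y, List.mem_cons_of_mem _ hy, hyk⟩
  obtain ⟨y, hy, hyk⟩ := key _ h
  obtain ⟨i, rfl⟩ := List.mem_ofFn.1 hy
  exact ⟨i, hyk⟩

lemma exists_sub {n : ℕ} (c : Fin n → ℕ) (t : ℕ) (ht : t ≤ ∑ i, c i) :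
    ∃ s : Fin n → ℕ, (∀ i, s i ≤ c i) ∧ ∑ i, s i = t := by
  induction t with
  | zero => exact ⟨fun _ => 0, fun i => Nat.zero_le _, by simp⟩
  | succ t ih =>
    obtain ⟨s, hs, hsum⟩ := ih (Nat.le_of_succ_le ht)
    have hex : ∃ i, s i < c i := by
      by_contra h
      push_neg at h
      have := Finset.sum_le_sum (fun i _ => h i : ∀ i ∈ Finset.univ, c i ≤ s i)
      omega
    obtain ⟨i, hi⟩ := hex
    refine ⟨Function.update s i (s i + 1), ?_, ?_⟩
    · intro j
      by_cases hj : j = i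
      · subst hj; rw [Function.update_self]; omega
      · rw [Function.update_of_ne hj]; exact hs j
    · rw [Finset.sum_update_of_mem (Finset.mem_univ i)]
      have := Finset.sum_eq_sum_sdiff_singleton_add (Finset.mem_univ i) s
      omega

lemma xor_sub_xor (A B C : ℕ) : (A ^^^ B) ^^^ (A ^^^ C) = B ^^^ C := by
  apply Nat.eq_of_testBit_eq; intro j
  simp only [Nat.testBit_xor]
  cases hA : A.testBit j <;> cases hB : B.testBit j <;> cases hC : C.testBit j <;> simp

def ryuoF (n p : ℕ) (x : Fin n → ℕ) : ℕ :=
  (∑ i : Fin n, x i) % p + p * nimSum n (fun i => x i / p)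

theorem stmt_17 (n p : ℕ) (hn : 1 ≤ n) (hp : 2 ≤ p)
    (G : (Fin n → ℕ) → ℕ)
    (hG : ∀ x : Fin n → ℕ, G x = mex (G '' moveN n p x)) :
    ∀ x : Fin n → ℕ,
      G x = (∑ i : Fin n, x i) % p + p * nimSum n (fun i => x i / p) := by
  classical
  have hp0 : 0 < p := by omega
  suffices H : ∀ m : ℕ, ∀ x : Fin n → ℕ, (∑ i, x i) = m → G x = ryuoF n p x by
    intro x; exact H _ x rfl
  intro m
  induction m using Nat.strong_induction_on with
  | _ m ih =>
  intro x hxm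
  subst hxm
  have modcancel : ∀ A s : ℕ, (A + s) % p = A % p → s % p = 0 := by
    intro A s h
    have h2 : A + s ≡ A + 0 [MOD p] := by
      show (A + s) % p = (A + 0) % p
      simpa using h
    have h3 := Nat.ModEq.add_left_cancel' A h2
    simpa [Nat.ModEq] using h3
  have hdec : ∀ q ∈ moveN n p x, ∑ i, q i < ∑ i, x i := by
    intro q hq
    rcases hq with ⟨i, hlt, heq⟩ | ⟨hle, hcard, -⟩
    · refine Finset.sum_lt_sum (fun j _ => ?_) ⟨i, Finset.mem_univ i, hlt⟩
      by_cases h : j = i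
      · subst h; exact le_of_lt hlt
      · exact le_of_eq (heq j h)
    · obtain ⟨i, hi⟩ := Finset.card_pos.mp
        (lt_of_lt_of_le (by norm_num : (0:ℕ) < 2) hcard)
      exact Finset.sum_lt_sum (fun j _ => hle j)
        ⟨i, Finset.mem_univ i, (Finset.mem_filter.mp hi).2⟩
  have himg : G '' moveN n p x = ryuoF n p '' moveN n p x :=
    Set.image_congr fun q hq => ih _ (hdec q hq) q rfl
  rw [hG x, himg]
  have hgoal : mex (ryuoF n p '' moveN n p x) = ryuoF n p x := by
    refine mex_eq_of ?_ ?_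
    · -- ryuoF x is not the value of any move
      rintro ⟨q, hq, hfq⟩
      have hqle : ∀ i, q i ≤ x i := by
        rcases hq with ⟨i, hlt, heq⟩ | ⟨hle, -, -⟩
        · intro j; by_cases h : j = i
          · subst h; exact le_of_lt hlt
          · exact le_of_eq (heq j h)
        · exact hle
      have hsumdec : ∑ i, x i = ∑ i, q i + ∑ i, (x i - q i) := by
        rw [← Finset.sum_add_distrib]
        exact Finset.sum_congr rfl fun i _ => by have := hqle i; omega
      have hmq : (∑ i, q i) % p < p := Nat.mod_lt _ hp0
      have hmx : (∑ i, x i) % p < p := Nat.mod_lt _ hp0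
      simp only [ryuoF] at hfq
      have e1 : (∑ i, q i) % p = (∑ i, x i) % p := by
        have h : ((∑ i, q i) % p + p * nimSum n (fun i => q i / p)) % p
            = ((∑ i, x i) % p + p * nimSum n (fun i => x i / p)) % p :=
          congrArg (· % p) hfq
        rwa [Nat.add_mul_mod_self_left, Nat.add_mul_mod_self_left,
          Nat.mod_eq_of_lt hmq, Nat.mod_eq_of_lt hmx] at h
      have e2 : nimSum n (fun i => q i / p) = nimSum n (fun i => x i / p) := by
        rw [e1] at hfq
        exact Nat.eq_of_mul_eq_mul_left hp0 (Nat.add_left_cancel hfq)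
      have hmod0 : (∑ i, (x i - q i)) % p = 0 := by
        apply modcancel (∑ i, q i)
        rw [← hsumdec, e1]
      rcases hq with ⟨i, hlt, heq⟩ | ⟨hle, hcard, hsum⟩
      · -- single heap move
        have hone : ∑ j, (x j - q j) = x i - q i := by
          apply Finset.sum_eq_single
          · intro j _ hji; rw [heq j hji]; omega
          · intro h; exact absurd (Finset.mem_univ i) h
        rw [hone] at hmod0
        obtain ⟨u, hu⟩ : p ∣ (x i - q i) := Nat.dvd_of_mod_eq_zero hmod0
        have hu1 : 1 ≤ u := by
          rcases Nat.eq_zero_or_pos u with h | h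
          · subst h; simp at hu; omega
          · exact h
        have hple : p * u ≤ x i := by rw [← hu]; omega
        have hqi' : q i = x i - p * u := by rw [← hu]; omega
        have hudiv : u ≤ x i / p := by
          rw [Nat.le_div_iff_mul_le hp0, Nat.mul_comm]; exact hple
        have hfun : (fun j => q j / p)
            = Function.update (fun j => x j / p) i (x i / p - u) := by
          funext j
          by_cases h : j = i
          · subst h
            rw [Function.update_self, hqi', Nat.sub_mul_div _ p u]
          · rw [Function.update_of_ne h, heq j h]
        rw [hfun, nimSum_update] at e2
        have h5 : x i / p - u = x i / p := by
          calc x i / p - u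
              = ((x i / p - u) ^^^ (x i / p ^^^ nimSum n (fun j => x j / p)))
                ^^^ (x i / p ^^^ nimSum n (fun j => x j / p)) :=
                (Nat.xor_xor_cancel_right _ _).symm
            _ = nimSum n (fun j => x j / p)
                ^^^ (x i / p ^^^ nimSum n (fun j => x j / p)) := by rw [e2]
            _ = x i / p := by
                rw [Nat.xor_comm (x i / p) (nimSum n (fun j => x j / p)),
                  Nat.xor_xor_cancel_left]
        have hdiv_pos : 1 ≤ x i / p := le_trans hu1 hudiv
        omega
      · -- multi heap move
        have ht1 : 1 ≤ ∑ i, (x i - q i) := by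
          obtain ⟨i, hi⟩ := Finset.card_pos.mp
            (lt_of_lt_of_le (by norm_num : (0:ℕ) < 2) hcard)
          have hi2 := (Finset.mem_filter.mp hi).2
          have h9 : x i - q i ≤ ∑ j, (x j - q j) :=
            Finset.single_le_sum (f := fun j => x j - q j)
              (fun j _ => Nat.zero_le _) (Finset.mem_univ i)
          omega
        have := Nat.mod_eq_of_lt (show ∑ i, (x i - q i) < p by omega)
        omega
    · -- every smaller value is achieved
      intro v hv
      simp only [ryuoF] at hv
      have hvd := Nat.div_add_mod v p
      have ha : v % p < p := Nat.mod_lt _ hp0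
      have hA : (∑ i, x i) % p < p := Nat.mod_lt _ hp0
      have hbN : v / p ≤ nimSum n (fun i => x i / p) := by
        by_contra h
        push_neg at h
        have h2 : p * (nimSum n (fun i => x i / p) + 1) ≤ p * (v / p) :=
          Nat.mul_le_mul_left p h
        rw [Nat.mul_add, Nat.mul_one] at h2
        set PN := p * nimSum n (fun i => x i / p)
        set PB := p * (v / p)
        omega
      rcases eq_or_lt_of_le hbN with hbeq | hblt
      · -- equal nim sums: adjust the remainder
        have haA : v % p < (∑ i, x i) % p := by
          have h1 : p * (v / p) = p * nimSum n (fun i => x i / p) := by rw [hbeq]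
          set PN := p * nimSum n (fun i => x i / p)
          set PB := p * (v / p)
          omega
        have hressum : (∑ i, x i) % p ≤ ∑ i, x i % p := by
          have hde : ∑ i, x i = p * (∑ i, x i / p) + ∑ i, x i % p := by
            rw [Finset.mul_sum, ← Finset.sum_add_distrib]
            exact Finset.sum_congr rfl fun i _ => (Nat.div_add_mod (x i) p).symm
          calc (∑ i, x i) % p
              = (p * (∑ i, x i / p) + ∑ i, x i % p) % p := by rw [← hde]
            _ = (∑ i, x i % p) % p := Nat.mul_add_mod _ _ _
            _ ≤ ∑ i, x i % p := Nat.mod_le _ _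
        obtain ⟨s, hs, hssum⟩ := exists_sub (fun i => x i % p)
          ((∑ i, x i) % p - v % p) (le_trans (Nat.sub_le _ _) hressum)
        have hsx : ∀ i, s i ≤ x i := fun i => le_trans (hs i) (Nat.mod_le _ _)
        refine ⟨fun i => x i - s i, ?_, ?_⟩
        · -- it is a legal move
          by_cases hc : 2 ≤ (Finset.univ.filter fun i => x i - s i < x i).card
          · right
            refine ⟨fun i => Nat.sub_le _ _, hc, ?_⟩
            show ∑ i, (x i - (x i - s i)) ≤ p - 1
            have he : ∑ i, (x i - (x i - s i)) = ∑ i, s i :=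
              Finset.sum_congr rfl fun i _ => by have := hsx i; omega
            rw [he, hssum]
            have h8 : (∑ i, x i) % p ≤ p - 1 := by omega
            exact le_trans (Nat.sub_le _ _) h8
          · left
            have hne : ∃ i, 0 < s i := by
              by_contra h; push_neg at h
              have : ∑ i, s i = 0 :=
                Finset.sum_eq_zero fun i _ => by have := h i; omega
              omega
            obtain ⟨i0, hi0⟩ := hne
            have hall : ∀ j, j ≠ i0 → s j = 0 := by
              intro j hj
              by_contra hne2
              apply hc
              have hsub : ({j, i0} : Finset (Fin n)) ⊆
                  Finset.univ.filter fun i => x i - s i < x i := by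
                intro k hk
                simp only [Finset.mem_insert, Finset.mem_singleton] at hk
                rcases hk with rfl | rfl
                · exact Finset.mem_filter.mpr
                    ⟨Finset.mem_univ _, by have := hsx k; omega⟩
                · exact Finset.mem_filter.mpr
                    ⟨Finset.mem_univ _, by have := hsx k; omega⟩
              calc 2 = ({j, i0} : Finset (Fin n)).card := (Finset.card_pair hj).symm
                _ ≤ _ := Finset.card_le_card hsub
            exact ⟨i0, by show x i0 - s i0 < x i0; have := hsx i0; omega,
              fun j hj => by show x j - s j = x j; have := hall j hj; omega⟩
        · -- its value is v
          have hqd : ∀ i, (x i - s i) / p = x i / p := by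
            intro i
            have hdm := Nat.div_add_mod (x i) p
            have hmlt := Nat.mod_lt (x i) hp0
            have h1 : x i - s i = p * (x i / p) + (x i % p - s i) := by
              have := hs i
              set d := p * (x i / p)
              omega
            rw [h1, Nat.mul_add_div hp0,
              Nat.div_eq_of_lt (by omega : x i % p - s i < p), Nat.add_zero]
          have hns : nimSum n (fun i => (x i - s i) / p)
              = nimSum n (fun i => x i / p) := by
            congr 1; funext i; exact hqd i
          have hsum2 : ∑ i, x i = ∑ i, (x i - s i) + ∑ i, s i := by
            rw [← Finset.sum_add_distrib]
            exact Finset.sum_congr rfl fun i _ => by have := hsx i; omega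
          have hmodq : (∑ i, (x i - s i)) % p = v % p := by
            have hdm := Nat.div_add_mod (∑ i, x i) p
            have h2 : ∑ i, (x i - s i) = p * ((∑ i, x i) / p) + v % p := by
              set d := p * ((∑ i, x i) / p)
              omega
            rw [h2, Nat.mul_add_mod, Nat.mod_eq_of_lt ha]
          show ryuoF n p (fun i => x i - s i) = v
          simp only [ryuoF]
          rw [hmodq, hns, ← hbeq]
          omega
      · -- smaller nim sum: change one floor
        have hu0 : (v / p) ^^^ nimSum n (fun i => x i / p) ≠ 0 := fun h =>
          absurd (xor_eq_zero_iff.mp h) (ne_of_lt hblt)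
        obtain ⟨k, hk1, hk2⟩ := Nat.exists_most_significant_bit hu0
        have hNk : (nimSum n (fun i => x i / p)).testBit k = true := by
          by_contra hN2
          simp only [Bool.not_eq_true] at hN2
          rw [Nat.testBit_xor, hN2, Bool.xor_false] at hk1
          have : nimSum n (fun i => x i / p) < v / p := by
            refine Nat.lt_of_testBit k hN2 hk1 fun j hj => ?_
            have h3 := hk2 j hj
            rw [Nat.testBit_xor] at h3
            cases hb : (v / p).testBit j <;>
              cases hn2 : (nimSum n (fun i => x i / p)).testBit j <;>
              first
              | rfl
              | (rw [hb, hn2] at h3; simp at h3)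
          omega
        obtain ⟨i, hik⟩ := testBit_nimSum n (fun j => x j / p) k hNk
        set m' := (x i / p) ^^^ ((v / p) ^^^ nimSum n (fun j => x j / p)) with hm'
        have hm'lt : m' < x i / p := by
          apply Nat.lt_of_testBit k
          · rw [hm', Nat.testBit_xor, hik, hk1]; rfl
          · exact hik
          · intro j hj
            rw [hm', Nat.testBit_xor, hk2 j hj, Bool.xor_false]
        set R := ∑ j ∈ Finset.univ \ {i}, x j with hR
        set c := (v % p + (p - R % p)) % p with hc
        have hcp : c < p := Nat.mod_lt _ hp0
        have hxdm := Nat.div_add_mod (x i) p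
        have hxi_lt : p * m' + c < x i := by
          have h2 : p * (m' + 1) ≤ p * (x i / p) := Nat.mul_le_mul_left p hm'lt
          rw [Nat.mul_add, Nat.mul_one] at h2
          set d1 := p * m'
          set d2 := p * (x i / p)
          omega
        refine ⟨Function.update x i (p * m' + c), ?_, ?_⟩
        · left
          exact ⟨i, by rw [Function.update_self]; exact hxi_lt,
            fun j hj => Function.update_of_ne hj _ _⟩
        · show ryuoF n p (Function.update x i (p * m' + c)) = v
          simp only [ryuoF]
          have hqd : (fun j => Function.update x i (p * m' + c) j / p)
              = Function.update (fun j => x j / p) i m' := by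
            funext j
            by_cases hji : j = i
            · subst hji
              rw [Function.update_self, Function.update_self,
                Nat.mul_add_div hp0, Nat.div_eq_of_lt hcp, Nat.add_zero]
            · rw [Function.update_of_ne hji, Function.update_of_ne hji]
          have hnim : nimSum n (fun j => Function.update x i (p * m' + c) j / p)
              = v / p := by
            rw [hqd, nimSum_update, hm', xor_sub_xor, Nat.xor_assoc,
              Nat.xor_self, Nat.xor_zero]
          rw [hnim]
          have hsumq : ∑ j, Function.update x i (p * m' + c) j
              = (p * m' + c) + R := by
            rw [Finset.sum_update_of_mem (Finset.mem_univ i), ← hR]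
          rw [hsumq]
          have hRdm := Nat.div_add_mod R p
          have hRe : R % p < p := Nat.mod_lt _ hp0
          have key : v % p + (p - R % p) + R = v % p + p * (1 + R / p) := by
            have h7 : p * (1 + R / p) = p + p * (R / p) := by
              rw [Nat.mul_add, Nat.mul_one]
            set d := p * (R / p)
            omega
          rw [Nat.add_assoc, Nat.mul_add_mod, hc, Nat.mod_add_mod, key,
            Nat.add_mul_mod_self_left, Nat.mod_eq_of_lt ha]
          omega
  exact hgoal
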